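/- Let m_B ≥ 2 and k ≥ 1 be naturals, and let buyers be i.i.d. with value 2 w.p. 1/2 and 0 otherwise, the seller value be 1 w.p. 1/2 and 0 otherwise, independent. Then OPT(1, m_B) = (3/2)·(1 - 2^{-m_B}) and BTR(1, m_B + k) = (3/2)·(1 - 2^{-(m_B+k)} - (m_B+k)·2^{-(m_B+k)}). -/

import Mathlib

open MeasureTheory
open scoped Classical

noncomputable def buyerHalfDist : Measure ℝ :=
  (2 : ENNReal)⁻¹ • Measure.dirac (2 : ℝ) + (2 : ENNReal)⁻¹ • Measure.dirac (0 : ℝ)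

noncomputable def sellerHalfDist : Measure ℝ :=
  (2 : ENNReal)⁻¹ • Measure.dirac (1 : ℝ) + (2 : ENNReal)⁻¹ • Measure.dirac (0 : ℝ)

/-- the buyer profile corresponding to a set of high buyers -/
noncomputable def hb {n : ℕ} (S : Finset (Fin n)) : Fin n → ℝ := fun i => if i ∈ S then 2 else 0

instance : IsProbabilityMeasure buyerHalfDist := by
  constructor
  simp [buyerHalfDist, ENNReal.inv_two_add_inv_two]

instance : IsProbabilityMeasure sellerHalfDist := by
  constructor
  simp [sellerHalfDist, ENNReal.inv_two_add_inv_two]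

lemma pi_buyer (n : ℕ) :
    Measure.pi (fun _ : Fin n => buyerHalfDist)
      = ((2 : ENNReal) ^ n)⁻¹ • ∑ S : Finset (Fin n), Measure.dirac (hb S) := by
  refine Measure.pi_eq fun s hs => ?_
  have hpi : MeasurableSet (Set.pi Set.univ s) := MeasurableSet.univ_pi hs
  rw [Measure.smul_apply, Measure.finset_sum_apply]
  have hterm : ∀ S : Finset (Fin n),
      Measure.dirac (hb S) (Set.pi Set.univ s)
        = (∏ i ∈ S, (if (2:ℝ) ∈ s i then (1:ENNReal) else 0))
            * ∏ i ∈ Sᶜ, (if (0:ℝ) ∈ s i then (1:ENNReal) else 0) := by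
    intro S
    rw [Measure.dirac_apply' _ hpi, Set.indicator_apply]
    simp only [Pi.one_apply]
    have h1 : (if hb S ∈ Set.pi Set.univ s then (1:ENNReal) else 0)
        = ∏ i : Fin n, (if hb S i ∈ s i then (1:ENNReal) else 0) := by
      rw [Fintype.prod_boole]
      simp [Set.mem_pi]
    have h2 : ∀ i : Fin n, (if hb S i ∈ s i then (1:ENNReal) else 0)
        = if i ∈ S then (if (2:ℝ) ∈ s i then (1:ENNReal) else 0)
          else (if (0:ℝ) ∈ s i then (1:ENNReal) else 0) := by
      intro i
      by_cases h : i ∈ S <;> simp [hb, h]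
    rw [h1]
    simp only [h2]
    rw [Finset.prod_ite]
    congr 1
    · apply Finset.prod_congr _ fun _ _ => rfl
      ext i; simp
    · apply Finset.prod_congr _ fun _ _ => rfl
      ext i; simp
  simp only [hterm]
  have hb' : ∀ i : Fin n, buyerHalfDist (s i)
      = 2⁻¹ * ((if (2:ℝ) ∈ s i then (1:ENNReal) else 0)
          + (if (0:ℝ) ∈ s i then (1:ENNReal) else 0)) := by
    intro i
    simp [buyerHalfDist, Measure.dirac_apply' _ (hs i), Set.indicator_apply, mul_add]
  simp only [hb']
  rw [Finset.prod_mul_distrib, Finset.prod_const, Finset.prod_add, Finset.powerset_univ]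
  simp only [← Finset.compl_eq_univ_sdiff]
  rw [smul_eq_mul, ← ENNReal.inv_pow]
  congr 1
  simp

lemma prod_repr (n : ℕ) :
    sellerHalfDist.prod (Measure.pi fun _ : Fin n => buyerHalfDist)
      = ((2 : ENNReal) ^ (n + 1))⁻¹ • ∑ p : Bool × Finset (Fin n),
          Measure.dirac (((if p.1 then (1:ℝ) else 0), hb p.2) : ℝ × (Fin n → ℝ)) := by
  refine Measure.prod_eq fun s t hs ht => ?_
  rw [Measure.smul_apply, Measure.finset_sum_apply]
  have hst : MeasurableSet (s ×ˢ t) := hs.prod ht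
  have hterm : ∀ p : Bool × Finset (Fin n),
      Measure.dirac (((if p.1 then (1:ℝ) else 0), hb p.2) : ℝ × (Fin n → ℝ)) (s ×ˢ t)
        = (if (if p.1 then (1:ℝ) else 0) ∈ s then (1:ENNReal) else 0)
            * (if hb p.2 ∈ t then (1:ENNReal) else 0) := by
    intro p
    rw [Measure.dirac_apply' _ hst, Set.indicator_apply]
    by_cases h1 : (if p.1 then (1:ℝ) else 0) ∈ s <;> by_cases h2 : hb p.2 ∈ t <;>
      simp [Set.mem_prod, h1, h2]
  simp only [hterm]
  have hseller : sellerHalfDist s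
      = 2⁻¹ * ((if (1:ℝ) ∈ s then (1:ENNReal) else 0) + (if (0:ℝ) ∈ s then (1:ENNReal) else 0)) := by
    simp [sellerHalfDist, Measure.dirac_apply' _ hs, Set.indicator_apply, mul_add]
  have hpit : (Measure.pi fun _ : Fin n => buyerHalfDist) t
      = ((2:ENNReal) ^ n)⁻¹ * ∑ S : Finset (Fin n), (if hb S ∈ t then (1:ENNReal) else 0) := by
    rw [pi_buyer, Measure.smul_apply, Measure.finset_sum_apply, smul_eq_mul]
    congr 1
    exact Finset.sum_congr rfl fun S _ => by
      rw [Measure.dirac_apply' _ ht, Set.indicator_apply, Pi.one_apply]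
  rw [hseller, hpit, smul_eq_mul]
  rw [show ((2:ENNReal) ^ (n+1))⁻¹ = 2⁻¹ * ((2:ENNReal)^n)⁻¹ by
    rw [pow_succ, ENNReal.mul_inv (by simp) (by simp), mul_comm]]
  rw [Fintype.sum_prod_type, Fintype.sum_bool]
  simp only [Bool.false_eq_true, if_false, if_true, ← Finset.mul_sum, ← Finset.sum_add_distrib]
  ring

lemma integrable_dirac'' {α : Type*} [MeasurableSpace α] [MeasurableSingletonClass α]
    {f : α → ℝ} (hf : Measurable f) (a : α) : Integrable f (Measure.dirac a) := by
  refine ⟨hf.aestronglyMeasurable, ?_⟩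
  rw [HasFiniteIntegral, lintegral_dirac]
  exact ENNReal.coe_lt_top

/-- Main integral formula. -/
lemma integral_repr (n : ℕ) {f : ℝ × (Fin n → ℝ) → ℝ} (hf : Measurable f) :
    (∫ x, f x ∂(sellerHalfDist.prod (Measure.pi fun _ : Fin n => buyerHalfDist)))
      = ((1:ℝ)/2) ^ (n + 1) * ∑ p : Bool × Finset (Fin n), f ((if p.1 then 1 else 0), hb p.2) := by
  rw [prod_repr, integral_smul_measure,
    integral_finset_sum_measure (fun p _ => integrable_dirac'' hf _)]
  simp only [integral_dirac]
  rw [smul_eq_mul]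
  congr 1
  rw [ENNReal.inv_pow, ENNReal.toReal_pow, ENNReal.toReal_inv]
  norm_num

lemma sup_hb {n : ℕ} (hn : 0 < n) (S : Finset (Fin n)) :
    (⨆ i, hb S i) = if S.Nonempty then (2:ℝ) else 0 := by
  haveI : Nonempty (Fin n) := ⟨⟨0, hn⟩⟩
  by_cases h : S.Nonempty
  · obtain ⟨j, hj⟩ := h
    rw [if_pos ⟨j, hj⟩]
    apply le_antisymm
    · apply ciSup_le
      intro i
      by_cases hi : i ∈ S <;> simp [hb, hi]
    · have := le_ciSup (f := hb S) (Set.Finite.bddAbove (Set.finite_range _)) j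
      refine le_trans (le_of_eq ?_) this
      simp [hb, hj]
  · rw [if_neg h]
    rw [Finset.not_nonempty_iff_eq_empty] at h
    simp [hb, h, ciSup_const]

lemma sum_nonempty {n : ℕ} (c : ℝ) :
    ∑ S : Finset (Fin n), (if S.Nonempty then c else 0) = ((2:ℝ)^n - 1) * c := by
  rw [Finset.sum_ite, Finset.sum_const, Finset.sum_const, smul_zero, add_zero]
  have h1 : Finset.univ.filter (fun S : Finset (Fin n) => ¬ S.Nonempty) = {∅} := by
    ext S; simp [Finset.not_nonempty_iff_eq_empty]
  have h2 : (Finset.univ.filter (fun S : Finset (Fin n) => S.Nonempty)).card = 2^n - 1 := by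
    have := Finset.card_filter_add_card_filter_not
      (s := (Finset.univ : Finset (Finset (Fin n)))) (p := fun S => S.Nonempty)
    rw [h1] at this
    simp only [Finset.card_singleton, Finset.card_univ, Fintype.card_finset,
      Fintype.card_fin] at this
    omega
  rw [h2, nsmul_eq_mul]
  congr 1
  have h3 : (1:ℕ) ≤ 2^n := Nat.one_le_two_pow
  rw [Nat.cast_sub h3]
  push_cast
  ring

lemma card_two_le {n : ℕ} :
    (Finset.univ.filter (fun S : Finset (Fin n) => 2 ≤ S.card)).card = 2^n - 1 - n := by
  have h1 : Finset.univ.filter (fun S : Finset (Fin n) => ¬ 2 ≤ S.card)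
      = {∅} ∪ Finset.univ.filter (fun S : Finset (Fin n) => S.card = 1) := by
    ext S
    simp only [Finset.mem_filter, Finset.mem_univ, true_and, Finset.mem_union,
      Finset.mem_singleton]
    constructor
    · intro h
      have h0 : S.card = 0 ∨ S.card = 1 := by omega
      rcases h0 with h' | h'
      · exact Or.inl (Finset.card_eq_zero.mp h')
      · exact Or.inr h'
    · rintro (rfl | h)
      · simp
      · simp [h]
  have h2 : (Finset.univ.filter (fun S : Finset (Fin n) => S.card = 1)).card = n := by
    have : Finset.univ.filter (fun S : Finset (Fin n) => S.card = 1)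
        = Finset.powersetCard 1 (Finset.univ : Finset (Fin n)) := by
      rw [Finset.powersetCard_eq_filter, Finset.powerset_univ]
    rw [this, Finset.card_powersetCard]
    simp
  have h3 : ({∅} ∪ Finset.univ.filter (fun S : Finset (Fin n) => S.card = 1)).card = 1 + n := by
    rw [Finset.card_union_of_disjoint, Finset.card_singleton, h2]
    rw [Finset.disjoint_singleton_left]
    simp
  have h4 := Finset.card_filter_add_card_filter_not
    (s := (Finset.univ : Finset (Finset (Fin n)))) (p := fun S => 2 ≤ S.card)
  rw [h1, h3] at h4
  simp only [Finset.card_univ, Fintype.card_finset, Fintype.card_fin] at h4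
  omega

lemma sum_two_le {n : ℕ} (c : ℝ) :
    ∑ S : Finset (Fin n), (if 2 ≤ S.card then c else 0) = ((2:ℝ)^n - 1 - n) * c := by
  rw [Finset.sum_ite, Finset.sum_const, Finset.sum_const, smul_zero, add_zero,
    card_two_le, nsmul_eq_mul]
  congr 1
  have h3 : n + 1 ≤ 2^n := Nat.lt_two_pow_self
  rw [Nat.sub_sub, Nat.cast_sub (by omega)]
  push_cast
  ring

theorem two_point_opt_and_btr (mB k : ℕ) (hm : 2 ≤ mB) (hk : 1 ≤ k) :
    ((∫ x : ℝ × (Fin mB → ℝ), max ((⨆ i, x.2 i) - x.1) 0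
        ∂(sellerHalfDist.prod (Measure.pi fun _ => buyerHalfDist)))
      = (3 / 2) * (1 - (1 / 2 : ℝ) ^ mB))
    ∧ ((∫ x : ℝ × (Fin (mB + k) → ℝ),
          (if 2 ≤ (Finset.univ.filter fun i => x.2 i = 2).card
            then (⨆ i, x.2 i) - x.1 else 0)
          ∂(sellerHalfDist.prod (Measure.pi fun _ => buyerHalfDist)))
        = (3 / 2) * (1 - (1 / 2 : ℝ) ^ (mB + k)
            - ((mB : ℝ) + k) * (1 / 2 : ℝ) ^ (mB + k))) := by
  constructor
  · -- OPT part
    have hn : 0 < mB := by omega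
    have hf : Measurable fun x : ℝ × (Fin mB → ℝ) => max ((⨆ i, x.2 i) - x.1) 0 :=
      ((Measurable.iSup fun i => (measurable_pi_apply i).comp measurable_snd).sub
        measurable_fst).max measurable_const
    rw [integral_repr mB hf, Fintype.sum_prod_type, Fintype.sum_bool]
    simp only [Bool.false_eq_true, if_false, if_true]
    have e1 : ∀ S : Finset (Fin mB),
        max ((⨆ i, hb S i) - (1:ℝ)) 0 = if S.Nonempty then (1:ℝ) else 0 := by
      intro S
      rw [sup_hb hn]
      by_cases h : S.Nonempty <;> simp [h] <;> norm_num
    have e2 : ∀ S : Finset (Fin mB),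
        max ((⨆ i, hb S i) - (0:ℝ)) 0 = if S.Nonempty then (2:ℝ) else 0 := by
      intro S
      rw [sup_hb hn]
      by_cases h : S.Nonempty <;> simp [h] <;> norm_num
    simp only [e1, e2, sum_nonempty]
    have h2m : (2:ℝ)^mB ≠ 0 := by positivity
    simp only [one_div, inv_pow]
    field_simp
    ring
  · -- BTR part
    set n := mB + k with hnk
    have hn : 0 < n := by omega
    have hcard : Measurable fun x : ℝ × (Fin n → ℝ) =>
        (Finset.univ.filter fun i => x.2 i = 2).card := by
      have : (fun x : ℝ × (Fin n → ℝ) => (Finset.univ.filter fun i => x.2 i = 2).card)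
          = fun x => ∑ i : Fin n, if x.2 i = 2 then 1 else 0 := by
        funext x
        rw [Finset.card_filter]
      rw [this]
      apply Finset.measurable_sum
      intro i _
      apply Measurable.ite _ measurable_const measurable_const
      exact ((measurable_pi_apply i).comp measurable_snd) (measurableSet_singleton 2)
    have hf : Measurable fun x : ℝ × (Fin n → ℝ) =>
        if 2 ≤ (Finset.univ.filter fun i => x.2 i = 2).card then (⨆ i, x.2 i) - x.1 else 0 := by
      apply Measurable.ite _
        ((Measurable.iSup fun i => (measurable_pi_apply i).comp measurable_snd).sub
          measurable_fst) measurable_const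
      exact hcard (Set.to_countable _).measurableSet
    rw [integral_repr n hf, Fintype.sum_prod_type, Fintype.sum_bool]
    simp only [Bool.false_eq_true, if_false, if_true]
    have hfil : ∀ S : Finset (Fin n), (Finset.univ.filter fun i => hb S i = 2) = S := by
      intro S
      ext i
      by_cases h : i ∈ S <;> simp [hb, h]
    have e : ∀ (sv : ℝ) (S : Finset (Fin n)),
        (if 2 ≤ (Finset.univ.filter fun i => hb S i = 2).card then (⨆ i, hb S i) - sv else 0)
          = if 2 ≤ S.card then (2 - sv) else 0 := by
      intro sv S
      rw [hfil]
      by_cases h : 2 ≤ S.card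
      · rw [if_pos h, if_pos h, sup_hb hn, if_pos (Finset.card_pos.mp (by omega))]
      · rw [if_neg h, if_neg h]
    simp only [e, sum_two_le]
    have h2m : (2:ℝ)^n ≠ 0 := by positivity
    have hcast : ((n : ℕ) : ℝ) = (mB : ℝ) + k := by push_cast [hnk]; ring
    rw [← hcast]
    simp only [one_div, inv_pow]
    field_simp
    ring
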